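/- Under the standing hypotheses, assume in addition 0 < η < e^{σ}/2. Let x ∈ B₁ with P_L x ≠ 0, let ψ ∈ ℝ satisfy P_L x/|P_L x| = (cos ψ, sin ψ, 0), and let t ∈ [0,1]. Then P_L G(t,x) ≠ 0 and T(t)P_L x ≠ 0; set v = P_L G(t,x)/|P_L G(t,x)|, w = T(t)P_L x/|T(t)P_L x| and w^⊥ = (−w₂, w₁, 0). There is a unique Δ ∈ [−π, π) with v = (cos(ψ − μt + Δ), sin(ψ − μt + Δ), 0), and this Δ satisfies Δ = arcsin(⟨v, w^⊥⟩) ∈ (−π/2, π/2), |⟨v, w^⊥⟩| ≤ η/(e^{σ} − η), and |Δ| ≤ arcsin(η/(e^{σ} − η)); in particular Δ = 0 when t = 0. -/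

import Mathlib

noncomputable section
open Real Set

abbrev R3 := EuclideanSpace ℝ (Fin 3)

/-- Orthogonal projection onto `L = ℝe₁ ⊕ ℝe₂`. -/
def PL (x : R3) : R3 := WithLp.toLp 2 (fun i : Fin 3 => if (i : ℕ) = 2 then 0 else x i)

/-- Orthogonal projection onto `U = ℝe₃`. -/
def PU (x : R3) : R3 := WithLp.toLp 2 (fun i : Fin 3 => if (i : ℕ) = 2 then x i else 0)

/-- The plane `L = ℝe₁ ⊕ ℝe₂`. -/
def Lset : Set R3 := {x | x 2 = 0}

/-- The line `U = ℝe₃`. -/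
def Uset : Set R3 := {x | x 0 = 0 ∧ x 1 = 0}

/-- `B₁ = {x : |P_L x| ≤ 1, |P_U x| ≤ 1}`. -/
def B1 : Set R3 := {x | ‖PL x‖ ≤ 1 ∧ ‖PU x‖ ≤ 1}

/-- The linearized flow `T(t)`. -/
def Tmap (σ μ u t : ℝ) (x : R3) : R3 := WithLp.toLp 2 (fun i : Fin 3 =>
  if (i : ℕ) = 0 then exp (σ * t) * (cos (μ * t) * x 0 + sin (μ * t) * x 1)
  else if (i : ℕ) = 1 then exp (σ * t) * (-(sin (μ * t)) * x 0 + cos (μ * t) * x 1)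
  else exp (u * t) * x 2)

/-- A C¹ flow on ℝ³. -/
def IsC1Flow (G : ℝ → R3 → R3) : Prop :=
  ContDiff ℝ 1 (fun p : ℝ × R3 => G p.1 p.2) ∧ (∀ x, G 0 x = x) ∧
    ∀ s t x, G (t + s) x = G t (G s x)

/-- `M` is invariant under the flow `G` in the set `N`. -/
def InvariantIn (G : ℝ → R3 → R3) (M N : Set R3) : Prop :=
  ∀ x ∈ M ∩ N, ∀ I : Set ℝ, (0 : ℝ) ∈ I → I.OrdConnected →
    (∀ t ∈ I, G t x ∈ N) → ∀ t ∈ I, G t x ∈ M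

open scoped RealInnerProductSpace

/-- The unit vector in the plane `L` at angle `θ`. -/
def angVec (θ : ℝ) : R3 := WithLp.toLp 2 (fun i : Fin 3 =>
  if (i : ℕ) = 0 then cos θ else if (i : ℕ) = 1 then sin θ else 0)

/-- For `w` in the plane `L`, the rotation `w^⊥ = (-w₂, w₁, 0)`. -/
def perpv (w : R3) : R3 := WithLp.toLp 2 (fun i : Fin 3 =>
  if (i : ℕ) = 0 then -(w 1) else if (i : ℕ) = 1 then w 0 else 0)

lemma angVec0 (θ : ℝ) : angVec θ 0 = Real.cos θ := rfl
lemma angVec1 (θ : ℝ) : angVec θ 1 = Real.sin θ := rfl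
lemma angVec2' (θ : ℝ) : angVec θ 2 = 0 := rfl
lemma perpv0 (w : R3) : perpv w 0 = -(w 1) := rfl
lemma perpv1 (w : R3) : perpv w 1 = w 0 := rfl
lemma perpv2 (w : R3) : perpv w 2 = 0 := rfl

-- AUX
lemma inner3 (x y : R3) : ⟪x,y⟫ = x 0 * y 0 + x 1 * y 1 + x 2 * y 2 := by
  simp [PiLp.inner_apply, Fin.sum_univ_three, RCLike.inner_apply, conj_trivial]; ring

lemma norm3 (x : R3) : ‖x‖ = Real.sqrt (x 0^2 + x 1^2 + x 2^2) := by
  simp [EuclideanSpace.norm_eq, Fin.sum_univ_three, sq_abs]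

lemma norm_angVec (θ : ℝ) : ‖angVec θ‖ = 1 := by
  rw [norm3]
  have : angVec θ 0 ^2 + angVec θ 1 ^2 + angVec θ 2 ^2 = 1 := by
    show Real.cos θ^2 + Real.sin θ^2 + (0:ℝ)^2 = 1
    nlinarith [Real.cos_sq_add_sin_sq θ]
  rw [this]; exact Real.sqrt_one

lemma PL_sub (x y : R3) : PL (x - y) = PL x - PL y := by
  ext i; fin_cases i <;> simp [PL]

lemma norm_PL_le (z : R3) : ‖PL z‖ ≤ ‖z‖ := by
  rw [norm3, norm3]
  apply Real.sqrt_le_sqrt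
  have h0 : PL z 0 = z 0 := rfl
  have h1 : PL z 1 = z 1 := rfl
  have h2 : PL z 2 = 0 := rfl
  rw [h0, h1, h2]
  nlinarith [sq_nonneg (z 2)]

lemma convex_B1 : Convex ℝ B1 := by
  intro x hx y hy a b ha hb hab
  have hPL : PL (a • x + b • y) = a • PL x + b • PL y := by
    ext i; fin_cases i <;> simp [PL]
  have hPU : PU (a • x + b • y) = a • PU x + b • PU y := by
    ext i; fin_cases i <;> simp [PU]
  constructor
  · rw [hPL]
    calc ‖a • PL x + b • PL y‖ ≤ ‖a • PL x‖ + ‖b • PL y‖ := norm_add_le _ _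
    _ = a * ‖PL x‖ + b * ‖PL y‖ := by
        rw [norm_smul, norm_smul, Real.norm_eq_abs, Real.norm_eq_abs,
          abs_of_nonneg ha, abs_of_nonneg hb]
    _ ≤ a * 1 + b * 1 := by gcongr; exacts [hx.1, hy.1]
    _ = 1 := by linarith
  · rw [hPU]
    calc ‖a • PU x + b • PU y‖ ≤ ‖a • PU x‖ + ‖b • PU y‖ := norm_add_le _ _
    _ = a * ‖PU x‖ + b * ‖PU y‖ := by
        rw [norm_smul, norm_smul, Real.norm_eq_abs, Real.norm_eq_abs,
          abs_of_nonneg ha, abs_of_nonneg hb]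
    _ ≤ a * 1 + b * 1 := by gcongr; exacts [hx.2, hy.2]
    _ = 1 := by linarith

def TmapCLM (σ μ u t : ℝ) : R3 →L[ℝ] R3 :=
  LinearMap.toContinuousLinearMap
    { toFun := Tmap σ μ u t
      map_add' := by intro x y; ext i; fin_cases i <;> (simp [Tmap]; ring)
      map_smul' := by intro c x; ext i; fin_cases i <;> (simp [Tmap]; ring) }

lemma Tmap_smul_angVec (σ μ u t r ψ : ℝ) :
    Tmap σ μ u t (r • angVec ψ) = (exp (σ*t) * r) • angVec (ψ - μ*t) := by
  ext i; fin_cases i <;>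
    simp [Tmap, angVec, Real.cos_sub, Real.sin_sub] <;> ring

lemma exists_angVec (v : R3) (hv2 : v 2 = 0) (hv : ‖v‖ = 1) : ∃ θ, v = angVec θ := by
  have h : v 0 ^ 2 + v 1 ^ 2 = 1 := by
    have h2 : Real.sqrt (v 0 ^2 + v 1 ^2 + 0^2) = 1 := by
      rw [← hv2, ← norm3]; exact hv
    nlinarith [Real.sq_sqrt (by positivity : (0:ℝ) ≤ v 0^2 + v 1^2 + 0^2), h2]
  set c : ℂ := ⟨v 0, v 1⟩ with hc
  have habs : ‖c‖ = 1 := by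
    rw [Complex.norm_def, Complex.normSq_mk]
    rw [show v 0 * v 0 + v 1 * v 1 = 1 by nlinarith]
    exact Real.sqrt_one
  have hc0 : c ≠ 0 := by
    intro h0; rw [h0] at habs; simp at habs
  refine ⟨c.arg, ?_⟩
  have hcos := Complex.cos_arg hc0
  have hsin := Complex.sin_arg c
  rw [habs] at hcos hsin
  ext i; fin_cases i
  · show v 0 = angVec c.arg 0
    simp [angVec, hcos]; rfl
  · show v 1 = angVec c.arg 1
    simp [angVec, hsin]; rfl
  · show v 2 = angVec c.arg 2
    simp [angVec, hv2]

lemma angVec_eq_exists {α β : ℝ} (h : angVec α = angVec β) : ∃ k : ℤ, α - β = 2*π*k := by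
  have hcos : Real.cos α = Real.cos β := congrArg (fun v : R3 => v 0) h
  have hsin : Real.sin α = Real.sin β := congrArg (fun v : R3 => v 1) h
  have := Real.Angle.cos_sin_inj hcos hsin
  rwa [Real.Angle.angle_eq_iff_two_pi_dvd_sub] at this

lemma small_k {d : ℝ} (k : ℤ) (h : d = 2*π*k) (hd : |d| < 2*π) : d = 0 := by
  have hπ := Real.pi_pos
  have hk2 : |(k:ℝ)| < 1 := by
    rw [abs_lt]
    rw [abs_lt] at hd
    constructor <;> nlinarith [hd.1, hd.2]
  have hk0 : k = 0 := by
    have h3 : |(k:ℤ)| < 1 := by exact_mod_cast hk2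
    exact Int.abs_lt_one_iff.mp h3
  rw [hk0] at h; push_cast at h; linarith

lemma angVec_unique {c Δ Δ' : ℝ} (hΔ : Δ ∈ Ico (-π) π) (hΔ' : Δ' ∈ Ico (-π) π)
    (h : angVec (c + Δ) = angVec (c + Δ')) : Δ = Δ' := by
  obtain ⟨k, hk⟩ := angVec_eq_exists h
  have hd : Δ - Δ' = 2*π*k := by linarith [hk]
  have hπ := Real.pi_pos
  have := small_k k hd (by
    rw [abs_lt]
    constructor <;> nlinarith [hΔ.1, hΔ.2, hΔ'.1, hΔ'.2])
  linarith

set_option maxHeartbeats 4000000 in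
theorem statement4
    (u σ μ η rB : ℝ) (hu : 0 < u) (hσ : σ < 0) (hμ : 0 < μ) (hη : 0 < η)
    (hB1B : B1 ⊆ Metric.closedBall (0 : R3) rB)
    (G : ℝ → R3 → R3) (hG : IsC1Flow G) (hG0 : ∀ t : ℝ, G t 0 = 0)
    (hD2 : ∀ t ∈ Icc (0:ℝ) 1, ∀ x ∈ B1, ∀ y : R3,
      ‖fderiv ℝ (G t) x y - Tmap σ μ u t y‖ ≤ η * ‖y‖)
    (hGB : ∀ t ∈ Icc (0:ℝ) 1, ∀ x ∈ B1, G t x ∈ Metric.closedBall (0 : R3) rB)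
    (hLinv : InvariantIn G Lset (Metric.closedBall 0 rB))
    (hUinv : InvariantIn G Uset (Metric.closedBall 0 rB))
    (hησ2 : η < exp σ / 2)
    (x : R3) (hx : x ∈ B1) (hPLx : PL x ≠ 0)
    (ψ : ℝ) (hψ : ‖PL x‖⁻¹ • PL x = angVec ψ)
    (t : ℝ) (ht : t ∈ Icc (0:ℝ) 1) :
    PL (G t x) ≠ 0 ∧ Tmap σ μ u t (PL x) ≠ 0 ∧
    (∃! Δ : ℝ, Δ ∈ Ico (-π) π ∧
      ‖PL (G t x)‖⁻¹ • PL (G t x) = angVec (ψ - μ * t + Δ)) ∧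
    ∀ Δ ∈ Ico (-π) π,
      ‖PL (G t x)‖⁻¹ • PL (G t x) = angVec (ψ - μ * t + Δ) →
        Δ = arcsin ⟪‖PL (G t x)‖⁻¹ • PL (G t x),
            perpv (‖Tmap σ μ u t (PL x)‖⁻¹ • Tmap σ μ u t (PL x))⟫ ∧
        Δ ∈ Ioo (-(π / 2)) (π / 2) ∧
        |⟪‖PL (G t x)‖⁻¹ • PL (G t x),
            perpv (‖Tmap σ μ u t (PL x)‖⁻¹ • Tmap σ μ u t (PL x))⟫| ≤ η / (exp σ - η) ∧
        |Δ| ≤ arcsin (η / (exp σ - η)) ∧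
        (t = 0 → Δ = 0) := by
  obtain ⟨ht0, ht1⟩ := ht
  have hπ := Real.pi_pos
  have hEσ : (0:ℝ) < exp σ := Real.exp_pos σ
  have hησ : η < exp σ - η := by linarith
  have hEση : (0:ℝ) < exp σ - η := by linarith
  set a := PL x with ha
  have hapos : 0 < ‖a‖ := norm_pos_iff.mpr hPLx
  have hax : a = ‖a‖ • angVec ψ := by
    rw [← hψ, smul_smul, mul_inv_cancel₀ (ne_of_gt hapos), one_smul]
  have ha2 : a 2 = 0 := rfl
  have hexp : (0:ℝ) < exp (σ*t) := Real.exp_pos _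
  have hexpσ : exp σ ≤ exp (σ*t) := Real.exp_le_exp.mpr (by nlinarith)
  have hTa : Tmap σ μ u t a = (exp (σ*t) * ‖a‖) • angVec (ψ - μ*t) := by
    calc Tmap σ μ u t a = Tmap σ μ u t (‖a‖ • angVec ψ) := by rw [← hax]
    _ = (exp (σ*t) * ‖a‖) • angVec (ψ - μ*t) := Tmap_smul_angVec σ μ u t ‖a‖ ψ
  have hcoef : (0:ℝ) < exp (σ*t) * ‖a‖ := by positivity
  have hTa_norm : ‖Tmap σ μ u t a‖ = exp (σ*t) * ‖a‖ := by
    rw [hTa, norm_smul, norm_angVec, mul_one, Real.norm_eq_abs, abs_of_pos hcoef]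
  have hTane : Tmap σ μ u t a ≠ 0 := by
    intro h0
    rw [h0, norm_zero] at hTa_norm
    exact absurd hTa_norm.symm (ne_of_gt hcoef)
  -- PU x ∈ B1 ∩ Uset
  have hPUx : PU x ∈ B1 := by
    constructor
    · have h0 : PL (PU x) = 0 := by ext i; fin_cases i <;> simp [PL, PU]
      rw [h0, norm_zero]; norm_num
    · have h0 : PU (PU x) = PU x := by ext i; fin_cases i <;> simp [PU]
      rw [h0]; exact hx.2
  have hUx : PU x ∈ Uset := ⟨rfl, rfl⟩
  -- MVT estimate
  have hdiffG : Differentiable ℝ (G t) := by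
    have hjoint : Differentiable ℝ (fun p : ℝ × R3 => G p.1 p.2) :=
      hG.1.differentiable one_ne_zero
    exact fun z => (hjoint (t, z)).comp z ((differentiableAt_const t).prodMk differentiableAt_id)
  have hxdiff : x - PU x = a := by
    ext i; fin_cases i <;> simp [ha, PL, PU]
  have hmvt : ‖G t x - G t (PU x) - Tmap σ μ u t a‖ ≤ η * ‖a‖ := by
    have happ := Convex.norm_image_sub_le_of_norm_hasFDerivWithin_le
      (f := fun z => G t z - TmapCLM σ μ u t z)
      (f' := fun z => fderiv ℝ (G t) z - TmapCLM σ μ u t)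
      (s := B1) (C := η)
      (fun z _ => (((hdiffG z).hasFDerivAt.sub
        ((TmapCLM σ μ u t).hasFDerivAt)).hasFDerivWithinAt))
      (fun z hz => ContinuousLinearMap.opNorm_le_bound _ hη.le (fun y => by
        rw [ContinuousLinearMap.sub_apply]
        exact hD2 t ⟨ht0, ht1⟩ z hz y))
      convex_B1 hPUx hx
    have h1 : TmapCLM σ μ u t x - TmapCLM σ μ u t (PU x) = Tmap σ μ u t a := by
      rw [← ContinuousLinearMap.map_sub, hxdiff]; rfl
    have heq : (G t x - TmapCLM σ μ u t x) - (G t (PU x) - TmapCLM σ μ u t (PU x))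
        = G t x - G t (PU x) - Tmap σ μ u t a := by
      rw [← h1]; abel
    rw [heq, hxdiff] at happ
    exact happ
  -- flow invariance: G t (PU x) ∈ Uset
  have hGU : G t (PU x) ∈ Uset := by
    refine hUinv (PU x) ⟨hUx, hB1B hPUx⟩ (Icc 0 1) ⟨le_rfl, zero_le_one⟩
      Set.ordConnected_Icc (fun s hs => hGB s hs (PU x) hPUx) t ⟨ht0, ht1⟩
  have hPLGU : PL (G t (PU x)) = 0 := by
    ext i; fin_cases i
    · show G t (PU x) 0 = 0; exact hGU.1
    · show G t (PU x) 1 = 0; exact hGU.2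
    · rfl
  set b := PL (G t x) with hb
  have hkey : ‖b - Tmap σ μ u t a‖ ≤ η * ‖a‖ := by
    have hPLT : PL (Tmap σ μ u t a) = Tmap σ μ u t a := by
      ext i; fin_cases i
      · rfl
      · rfl
      · show (0:ℝ) = exp (u*t) * a 2
        rw [ha2]; ring
    have heq : b - Tmap σ μ u t a = PL (G t x - G t (PU x) - Tmap σ μ u t a) := by
      rw [PL_sub, PL_sub, hPLGU, hPLT, hb]
      abel
    rw [heq]
    exact le_trans (norm_PL_le _) hmvt
  have hbTa : ‖Tmap σ μ u t a‖ ≤ ‖b‖ + ‖b - Tmap σ μ u t a‖ := by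
    have h9 : Tmap σ μ u t a = b - (b - Tmap σ μ u t a) := by abel
    conv_lhs => rw [h9]
    exact norm_sub_le _ _
  have hblow : (exp (σ*t) - η) * ‖a‖ ≤ ‖b‖ := by
    rw [hTa_norm] at hbTa
    nlinarith [hkey]
  have hblow' : (exp σ - η) * ‖a‖ ≤ ‖b‖ := by nlinarith
  have hbpos : 0 < ‖b‖ := lt_of_lt_of_le (by positivity) hblow'
  have hbne : b ≠ 0 := norm_pos_iff.mp hbpos
  -- v and w
  set v : R3 := ‖b‖⁻¹ • b with hv
  have hv2 : v 2 = 0 := by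
    show ‖b‖⁻¹ * b 2 = 0
    have : b 2 = 0 := rfl
    rw [this]; ring
  have hvnorm : ‖v‖ = 1 := by
    rw [hv, norm_smul, Real.norm_eq_abs, abs_of_pos (inv_pos.mpr hbpos),
      inv_mul_cancel₀ (ne_of_gt hbpos)]
  set w : R3 := ‖Tmap σ μ u t a‖⁻¹ • Tmap σ μ u t a with hwdef
  have hw : w = angVec (ψ - μ*t) := by
    rw [hwdef, hTa_norm, hTa, smul_smul, inv_mul_cancel₀ (ne_of_gt hcoef), one_smul]
  -- existence/uniqueness of Δ
  obtain ⟨θ, hθ⟩ := exists_angVec v hv2 hvnorm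
  set Δ₀ := toIcoMod Real.two_pi_pos (-π) (θ - (ψ - μ*t)) with hΔ₀def
  have hΔ₀mem : Δ₀ ∈ Ico (-π) π := by
    have := toIcoMod_mem_Ico Real.two_pi_pos (-π) (θ - (ψ - μ*t))
    rwa [show -π + 2*π = π by ring] at this
  have hΔ₀eq : v = angVec (ψ - μ*t + Δ₀) := by
    obtain ⟨k, hk⟩ : ∃ k : ℤ, θ - (ψ - μ*t) - Δ₀ = k • (2*π) :=
      ⟨toIcoDiv Real.two_pi_pos (-π) (θ - (ψ - μ*t)),
        self_sub_toIcoMod Real.two_pi_pos (-π) (θ - (ψ - μ*t))⟩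
    have hkk : ψ - μ*t + Δ₀ = θ + (-k : ℤ) * (2*π) := by
      push_cast
      rw [zsmul_eq_mul] at hk
      push_cast at hk
      linarith
    rw [hθ]
    ext i; fin_cases i
    · show Real.cos θ = Real.cos (ψ - μ*t + Δ₀)
      rw [hkk, Real.cos_add_int_mul_two_pi]
    · show Real.sin θ = Real.sin (ψ - μ*t + Δ₀)
      rw [hkk, Real.sin_add_int_mul_two_pi]
    · rfl
  have hpart3 : ∃! Δ : ℝ, Δ ∈ Ico (-π) π ∧ v = angVec (ψ - μ * t + Δ) := by
    refine ⟨Δ₀, ⟨hΔ₀mem, hΔ₀eq⟩, fun y hy => ?_⟩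
    exact angVec_unique hy.1 hΔ₀mem (by rw [← hy.2, hΔ₀eq])
  refine ⟨hbne, hTane, hpart3, ?_⟩
  intro Δ hΔ hΔeq
  have hsinΔ : ⟪v, perpv w⟫ = Real.sin Δ := by
    rw [hΔeq, hw, inner3]
    simp only [angVec0, angVec1, angVec2', perpv0, perpv1, perpv2]
    have h := Real.sin_sub (ψ - μ*t + Δ) (ψ - μ*t)
    rw [show ψ - μ*t + Δ - (ψ - μ*t) = Δ by ring] at h
    linear_combination -h
  have hcosΔ : ⟪v, w⟫ = Real.cos Δ := by
    rw [hΔeq, hw, inner3]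
    simp only [angVec0, angVec1, angVec2', perpv0, perpv1, perpv2]
    have h := Real.cos_sub (ψ - μ*t + Δ) (ψ - μ*t)
    rw [show ψ - μ*t + Δ - (ψ - μ*t) = Δ by ring] at h
    linear_combination -h
  have hwnorm : ‖w‖ = 1 := by rw [hw]; exact norm_angVec _
  have hpw_norm : ‖perpv w‖ = 1 := by
    rw [hw, norm3]
    simp only [perpv0, perpv1, perpv2, angVec0, angVec1, angVec2']
    rw [show (-Real.sin (ψ-μ*t))^2 + (Real.cos (ψ-μ*t))^2 + (0:ℝ)^2 = 1 by
      nlinarith [Real.cos_sq_add_sin_sq (ψ-μ*t)]]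
    exact Real.sqrt_one
  have hTapw : ⟪Tmap σ μ u t a, perpv w⟫ = 0 := by
    rw [hTa, hw, real_inner_smul_left, inner3]
    simp only [angVec0, angVec1, angVec2', perpv0, perpv1, perpv2]
    ring
  have hip : ⟪v, perpv w⟫ = ‖b‖⁻¹ * ⟪b - Tmap σ μ u t a, perpv w⟫ := by
    rw [hv, real_inner_smul_left]
    congr 1
    rw [inner_sub_left, hTapw, sub_zero]
  have habs : |⟪v, perpv w⟫| ≤ η / (exp σ - η) := by
    rw [hip, abs_mul, abs_inv, abs_norm]
    have h1 : |⟪b - Tmap σ μ u t a, perpv w⟫| ≤ η * ‖a‖ := by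
      refine le_trans (abs_real_inner_le_norm _ _) ?_
      rw [hpw_norm, mul_one]; exact hkey
    have h2 : ‖b‖⁻¹ * |⟪b - Tmap σ μ u t a, perpv w⟫| ≤ ‖b‖⁻¹ * (η * ‖a‖) := by
      gcongr
    refine le_trans h2 ?_
    rw [inv_mul_le_iff₀ hbpos]
    calc η * ‖a‖ = ((exp σ - η) * ‖a‖) * (η / (exp σ - η)) := by field_simp
    _ ≤ ‖b‖ * (η / (exp σ - η)) := mul_le_mul_of_nonneg_right hblow' (by positivity)
  have hww : ⟪Tmap σ μ u t a, w⟫ = exp (σ*t) * ‖a‖ := by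
    rw [hTa, hw, real_inner_smul_left, inner3]
    simp only [angVec0, angVec1, angVec2', perpv0, perpv1, perpv2]
    nlinarith [Real.cos_sq_add_sin_sq (ψ-μ*t)]
  have hinner_bw_low : exp (σ*t) * ‖a‖ - η * ‖a‖ ≤ ⟪b, w⟫ := by
    have h1 : |⟪b - Tmap σ μ u t a, w⟫| ≤ η * ‖a‖ := by
      refine le_trans (abs_real_inner_le_norm _ _) ?_
      rw [hwnorm, mul_one]; exact hkey
    have h2 := (abs_le.mp h1).1
    have h3 : ⟪b, w⟫ = ⟪b - Tmap σ μ u t a, w⟫ + ⟪Tmap σ μ u t a, w⟫ := by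
      rw [inner_sub_left]; ring
    rw [h3, hww]; linarith
  have hcpos : 0 < Real.cos Δ := by
    rw [← hcosΔ, hv, real_inner_smul_left]
    have h9 : 0 < ⟪b, w⟫ := lt_of_lt_of_le (by nlinarith) hinner_bw_low
    exact mul_pos (inv_pos.mpr hbpos) h9
  have hΔlt : Δ < π/2 := by
    by_contra hcon
    push_neg at hcon
    have := Real.cos_nonpos_of_pi_div_two_le_of_le hcon
      (by linarith [hΔ.2] : Δ ≤ π + π/2)
    linarith
  have hΔgt : -(π/2) < Δ := by
    by_contra hcon
    push_neg at hcon
    have h2 : π/2 ≤ -Δ := by linarith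
    have := Real.cos_nonpos_of_pi_div_two_le_of_le h2
      (by linarith [hΔ.1] : -Δ ≤ π + π/2)
    rw [Real.cos_neg] at this
    linarith
  have harcΔ : Δ = arcsin ⟪v, perpv w⟫ := by
    rw [hsinΔ]
    exact (Real.arcsin_sin hΔgt.le hΔlt.le).symm
  have habs' : |Real.sin Δ| ≤ η / (exp σ - η) := by rw [← hsinΔ]; exact habs
  have hΔabs : |Δ| ≤ arcsin (η / (exp σ - η)) := by
    rcases le_or_gt 0 Δ with h0 | h0
    · rw [abs_of_nonneg h0]
      calc Δ = arcsin (Real.sin Δ) := (Real.arcsin_sin hΔgt.le hΔlt.le).symm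
      _ ≤ arcsin (η/(exp σ - η)) := Real.monotone_arcsin (le_trans (le_abs_self _) habs')
    · rw [abs_of_neg h0]
      have h9 : -Δ = arcsin (Real.sin (-Δ)) :=
        (Real.arcsin_sin (by linarith) (by linarith)).symm
      rw [h9, Real.sin_neg]
      exact Real.monotone_arcsin (le_trans (neg_le_abs _) habs')
  have ht00 : t = 0 → Δ = 0 := by
    intro h00
    subst h00
    have hx0 : G 0 x = x := hG.2.1 x
    have hveq : angVec (ψ - μ * 0 + Δ) = angVec ψ := by
      rw [← hΔeq, hv, hb, hx0]
      exact hψ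
    obtain ⟨k, hk⟩ := angVec_eq_exists hveq
    have hΔk : Δ = 2*π*k := by
      have h9 : μ * (0:ℝ) = 0 := by ring
      rw [h9] at hk
      linarith
    have h10 := small_k k hΔk (by
      rw [abs_lt]; constructor <;> linarith [hΔgt, hΔlt, hπ])
    exact h10
  exact ⟨harcΔ, ⟨hΔgt, hΔlt⟩, habs, hΔabs, ht00⟩
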